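/- arXiv:2503.21053 — 4 statements merged into one kernel-verified Lean document; each statement's English description precedes it below -/
import Mathlib

section
/- Let (Ω, P) be a probability space, (ω_i)_{i=1}^{n} i.i.d. Ω-valued random elements, and let h : ℝⁿ¹ × Ω → ℝ be measurable in its second argument. Assume: (i) there are reals m ≤ M with m ≤ h(x, ω) ≤ M for all x and ω; (ii) for every ω, the map x ↦ h(x, ω) is Lipschitz with constant L > 0, and x ↦ E_ω[h(x, ω)] is Lipschitz with constant L. Let c : ℝⁿ¹ → ℝ, define f(x) = c(x) + E_ω[h(x, ω)] and f_n(x) = c(x) + (1/n)·Σ_{i=1}^{n} h(x, ω_i). Fix x̂ ∈ ℝⁿ¹, δ > 0, 0 < ε < 1 and κ ≥ 4L/δ. If n ≥ −8·log(ε/2)·(M−m)²/(κ²·δ⁴), then P( |f_n(x) − f(x)| ≤ κ·δ² for all x with ‖x − x̂‖ ≤ δ ) ≥ 1 − ε. -/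
open MeasureTheory ProbabilityTheory

/-- Pointwise convexity bound, normalized form. -/
lemma SAA.exp_le_cosh_add_aux (s y : ℝ) (hs : |s| ≤ 1) :
    Real.exp (s * y) ≤ Real.cosh y + s * Real.sinh y := by
  have h1 : (0:ℝ) ≤ (1 - s) / 2 := by linarith [(abs_le.1 hs).2]
  have h2 : (0:ℝ) ≤ (1 + s) / 2 := by linarith [(abs_le.1 hs).1]
  have key := convexOn_exp.2 (Set.mem_univ (-y)) (Set.mem_univ y) h1 h2 (by ring)
  simp only [smul_eq_mul] at key
  have harg : (1 - s) / 2 * (-y) + (1 + s) / 2 * y = s * y := by ring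
  rw [harg] at key
  refine key.trans (le_of_eq ?_)
  rw [Real.cosh_eq, Real.sinh_eq]
  ring

/-- Pointwise convexity bound: `exp (t*x) ≤ cosh (t*c) + (x/c) * sinh (t*c)` for `|x| ≤ c`. -/
lemma SAA.exp_le_cosh_add (x c t : ℝ) (hc : 0 < c) (hx : |x| ≤ c) :
    Real.exp (t * x) ≤ Real.cosh (t * c) + (x / c) * Real.sinh (t * c) := by
  have hs : |x / c| ≤ 1 := by
    rw [abs_div, abs_of_pos hc, div_le_one hc]
    exact hx
  have := SAA.exp_le_cosh_add_aux (x / c) (t * c) hs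
  have harg : x / c * (t * c) = t * x := by
    field_simp
  rw [harg] at this
  exact this

/-- A bounded measurable function is integrable w.r.t. a probability measure. -/
lemma SAA.integrable_of_bdd {Ω : Type*} [MeasurableSpace Ω] (Q : Measure Ω)
    [IsProbabilityMeasure Q] {g : Ω → ℝ} (hg : Measurable g) {C : ℝ} (hC : ∀ ω, |g ω| ≤ C) :
    Integrable g Q :=
  (integrable_const C).mono' hg.aestronglyMeasurable (Filter.Eventually.of_forall hC)

/-- Sub-Gaussian mgf bound for a bounded, mean-zero random variable. -/
lemma SAA.mgf_bdd {Ω : Type*} [MeasurableSpace Ω] (Q : Measure Ω) [IsProbabilityMeasure Q]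
    {g : Ω → ℝ} (hg : Measurable g) {c : ℝ} (hc : 0 < c) (hbd : ∀ ω, |g ω| ≤ c)
    (hmean : ∫ ω, g ω ∂Q = 0) (t : ℝ) :
    ∫ ω, Real.exp (t * g ω) ∂Q ≤ Real.exp (t ^ 2 * c ^ 2 / 2) := by
  have hgi : Integrable g Q := SAA.integrable_of_bdd Q hg hbd
  have hrhs : Integrable (fun ω => Real.cosh (t * c) + (g ω / c) * Real.sinh (t * c)) Q := by
    apply Integrable.add (integrable_const _)
    exact ((hgi.div_const c).mul_const _)
  have hexp : Integrable (fun ω => Real.exp (t * g ω)) Q := by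
    apply SAA.integrable_of_bdd Q ((hg.const_mul t).exp)
    intro ω
    rw [abs_of_pos (Real.exp_pos _)]
    apply Real.exp_le_exp.2
    calc t * g ω ≤ |t * g ω| := le_abs_self _
      _ = |t| * |g ω| := abs_mul _ _
      _ ≤ |t| * c := by
          have := hbd ω
          nlinarith [abs_nonneg t]
  have step1 : ∫ ω, Real.exp (t * g ω) ∂Q
      ≤ ∫ ω, (Real.cosh (t * c) + (g ω / c) * Real.sinh (t * c)) ∂Q := by
    apply integral_mono hexp hrhs
    intro ω
    exact SAA.exp_le_cosh_add (g ω) c t hc (hbd ω)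
  have step2 : ∫ ω, (Real.cosh (t * c) + (g ω / c) * Real.sinh (t * c)) ∂Q
      = Real.cosh (t * c) := by
    rw [integral_add (integrable_const _) ((hgi.div_const c).mul_const _),
      integral_const, probReal_univ, smul_eq_mul, one_mul]
    have : ∫ ω, (g ω / c) * Real.sinh (t * c) ∂Q
        = (∫ ω, g ω ∂Q) / c * Real.sinh (t * c) := by
      rw [← integral_div, ← integral_mul_const]
    rw [this, hmean]
    ring
  calc ∫ ω, Real.exp (t * g ω) ∂Q ≤ Real.cosh (t * c) := step1.trans (le_of_eq step2)
    _ ≤ Real.exp ((t * c) ^ 2 / 2) := Real.cosh_le_exp_half_sq (t * c)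
    _ = Real.exp (t ^ 2 * c ^ 2 / 2) := by ring_nf

/-- One-sided Chernoff/Hoeffding bound for sums of i.i.d.-style bounded mean-zero variables. -/
lemma SAA.chernoff {Θ : Type*} [MeasurableSpace Θ] (P : Measure Θ) [IsProbabilityMeasure P]
    (n : ℕ) (X : Fin n → Θ → ℝ) (hXmeas : ∀ i, Measurable (X i))
    (hindep : iIndepFun X P)
    {c : ℝ} (hc : 0 < c) (hbd : ∀ i θ, |X i θ| ≤ c) (hmean : ∀ i, ∫ θ, X i θ ∂P = 0)
    {a : ℝ} (ha : 0 ≤ a) :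
    (P {θ | (n : ℝ) * a ≤ ∑ i, X i θ}).toReal
      ≤ Real.exp (-(n * a ^ 2) / (2 * c ^ 2)) := by
  set t : ℝ := a / c ^ 2 with ht_def
  have ht : 0 ≤ t := div_nonneg ha (by positivity)
  have hSbd : ∀ θ, |∑ i, X i θ| ≤ n * c := by
    intro θ
    calc |∑ i, X i θ| ≤ ∑ i, |X i θ| := Finset.abs_sum_le_sum_abs _ _
      _ ≤ ∑ _i : Fin n, c := Finset.sum_le_sum fun i _ => hbd i θ
      _ = n * c := by simp [mul_comm]
  have hint : Integrable (fun θ => Real.exp (t * (∑ i, X i θ))) P := by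
    apply SAA.integrable_of_bdd P (C := Real.exp (|t| * (n * c)))
      ((Finset.measurable_sum _ (fun i _ => hXmeas i)).const_mul t |>.exp)
    intro θ
    rw [abs_of_pos (Real.exp_pos _)]
    apply Real.exp_le_exp.2
    calc t * (∑ i, X i θ) ≤ |t * (∑ i, X i θ)| := le_abs_self _
      _ = |t| * |∑ i, X i θ| := abs_mul _ _
      _ ≤ |t| * (n * c) := by
          have := hSbd θ
          nlinarith [abs_nonneg t]
  have hcher := measure_ge_le_exp_mul_mgf (X := fun θ => ∑ i, X i θ) (μ := P)
    ((n : ℝ) * a) ht hint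
  have hmgf_sum : mgf (fun θ => ∑ i, X i θ) P t = ∏ i, mgf (X i) P t := by
    have h0 : (fun θ => ∑ i, X i θ) = ∑ i, X i := by
      ext θ
      simp
    rw [h0]
    exact hindep.mgf_sum (t := t) hXmeas Finset.univ
  have hmgf_each : ∀ i : Fin n, mgf (X i) P t ≤ Real.exp (t ^ 2 * c ^ 2 / 2) := by
    intro i
    exact SAA.mgf_bdd P (hXmeas i) hc (fun θ => hbd i θ) (hmean i) t
  have hprod : ∏ i : Fin n, mgf (X i) P t ≤ Real.exp ((n : ℝ) * (t ^ 2 * c ^ 2 / 2)) := by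
    calc ∏ i : Fin n, mgf (X i) P t ≤ ∏ _i : Fin n, Real.exp (t ^ 2 * c ^ 2 / 2) :=
          Finset.prod_le_prod (fun i _ => mgf_nonneg) (fun i _ => hmgf_each i)
      _ = Real.exp ((n : ℝ) * (t ^ 2 * c ^ 2 / 2)) := by
          rw [Finset.prod_const, ← Real.exp_nat_mul]
          simp
  calc (P {θ | (n : ℝ) * a ≤ ∑ i, X i θ}).toReal
      ≤ Real.exp (-t * ((n : ℝ) * a)) * mgf (fun θ => ∑ i, X i θ) P t := hcher
    _ ≤ Real.exp (-t * ((n : ℝ) * a)) * Real.exp ((n : ℝ) * (t ^ 2 * c ^ 2 / 2)) := by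
        rw [hmgf_sum]
        exact mul_le_mul_of_nonneg_left hprod (Real.exp_pos _).le
    _ = Real.exp (-t * ((n : ℝ) * a) + (n : ℝ) * (t ^ 2 * c ^ 2 / 2)) := by
        rw [← Real.exp_add]
    _ = Real.exp (-(n * a ^ 2) / (2 * c ^ 2)) := by
        congr 1
        rw [ht_def]
        field_simp
        ring

set_option maxHeartbeats 1000000

/-- Theorem 1 (sample complexity of SAA): with `f x = c x + E_ω[h x ω]`, the
recourse function `h` bounded in `[m, M]` and `L`-Lipschitz in `x`, and the
sample average approximation `f_n` built from `n` i.i.d. scenarios `W i`,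
if `n ≥ -8 log(ε/2) (M-m)² / (κ² δ⁴)` and `κ ≥ 4L/δ`, then with probability
at least `1 - ε`, `|f_n x - f x| ≤ κ δ²` for all `x` in the ball `B(xhat, δ)`. -/
theorem stmt2
    {Θ : Type*} [MeasurableSpace Θ] (P : Measure Θ) [IsProbabilityMeasure P]
    {Ω : Type*} [MeasurableSpace Ω] (Q : Measure Ω) [IsProbabilityMeasure Q]
    (n₁ : ℕ) (n : ℕ) (hn : 0 < n)
    (W : Fin n → Θ → Ω) (hWmeas : ∀ i, Measurable (W i))
    (hindep : iIndepFun W P)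
    (hdist : ∀ i, Measure.map (W i) P = Q)
    (h : EuclideanSpace ℝ (Fin n₁) → Ω → ℝ)
    (hmeas : ∀ x, Measurable (h x))
    (m M : ℝ) (hmM : m ≤ M)
    (hbdd : ∀ x ω, h x ω ∈ Set.Icc m M)
    (L : ℝ) (hL : 0 < L)
    (hLip : ∀ ω, ∀ x y, |h x ω - h y ω| ≤ L * ‖x - y‖)
    (hLipE : ∀ x y, |(∫ ω, h x ω ∂Q) - ∫ ω, h y ω ∂Q| ≤ L * ‖x - y‖)
    (c : EuclideanSpace ℝ (Fin n₁) → ℝ)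
    (xhat : EuclideanSpace ℝ (Fin n₁)) (δ ε κ : ℝ)
    (hδ : 0 < δ) (hε : 0 < ε) (hε1 : ε < 1) (hκ : κ ≥ 4 * L / δ)
    (hsize : (n : ℝ) ≥ -8 * Real.log (ε / 2) * (M - m) ^ 2 / (κ ^ 2 * δ ^ 4)) :
    (P {θ | ∀ x, ‖x - xhat‖ ≤ δ →
        |(c x + (1 / (n : ℝ)) * ∑ i, h x (W i θ)) -
          (c x + ∫ ω, h x ω ∂Q)| ≤ κ * δ ^ 2}).toReal ≥ 1 - ε := by
  have hκpos : 0 < κ := lt_of_lt_of_le (by positivity) hκ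
  have hκδ : 4 * L ≤ κ * δ := by
    rw [ge_iff_le, div_le_iff₀ hδ] at hκ
    exact hκ
  -- degenerate case M = m
  rcases eq_or_lt_of_le hmM with hMm | hMm
  · have hconst : ∀ x ω, h x ω = m := by
      intro x ω
      have := hbdd x ω
      rw [← hMm] at this
      exact le_antisymm this.2 this.1
    have : {θ : Θ | ∀ x, ‖x - xhat‖ ≤ δ →
        |(c x + (1 / (n : ℝ)) * ∑ i, h x (W i θ)) -
          (c x + ∫ ω, h x ω ∂Q)| ≤ κ * δ ^ 2} = Set.univ := by
      ext θ
      simp only [Set.mem_setOf_eq, Set.mem_univ, iff_true]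
      intro x hx
      have h1 : ∑ i : Fin n, h x (W i θ) = n * m := by
        simp [hconst, mul_comm]
      have h2 : ∫ ω, h x ω ∂Q = m := by
        have : (fun ω => h x ω) = fun _ => m := funext (hconst x)
        rw [this, integral_const, probReal_univ, smul_eq_mul, one_mul]
      have hn' : (n : ℝ) ≠ 0 := Nat.cast_ne_zero.2 hn.ne'
      have hz : c x + (1 / (n : ℝ)) * ((n:ℝ) * m) - (c x + m) = 0 := by
        field_simp
        ring
      rw [h1, h2, hz, abs_zero]
      positivity
    rw [this]
    simp
    linarith
  -- main case m < M
  set cc : ℝ := M - m with hcc_def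
  have hccpos : 0 < cc := by simp [hcc_def]; linarith
  set μh : ℝ := ∫ ω, h xhat ω ∂Q with hμh_def
  have hint_h : ∀ x : EuclideanSpace ℝ (Fin n₁), Integrable (h x) Q := by
    intro x
    apply SAA.integrable_of_bdd Q (hmeas x) (C := |m| + |M|)
    intro ω
    have := hbdd x ω
    cases abs_cases (h x ω) with
    | inl hcase => cases abs_cases M with
      | inl h2 => cases abs_cases m with
        | inl h3 => simp only [Set.mem_Icc] at this; linarith [hcase.1, abs_nonneg m]
        | inr h3 => simp only [Set.mem_Icc] at this; linarith [hcase.1, abs_nonneg m]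
      | inr h2 => simp only [Set.mem_Icc] at this; linarith [hcase.1, abs_nonneg m, abs_nonneg M]
    | inr hcase => simp only [Set.mem_Icc] at this
                   linarith [hcase.1, abs_nonneg M, neg_abs_le m]
  have hμh_mem : m ≤ μh ∧ μh ≤ M := by
    constructor
    · calc m = ∫ _ω, m ∂Q := by
            rw [integral_const, probReal_univ, smul_eq_mul, one_mul]
        _ ≤ μh := integral_mono (integrable_const m) (hint_h xhat)
            (fun ω => (hbdd xhat ω).1)
    · calc μh ≤ ∫ _ω, M ∂Q := integral_mono (hint_h xhat) (integrable_const M)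
            (fun ω => (hbdd xhat ω).2)
        _ = M := by
            rw [integral_const, probReal_univ, smul_eq_mul, one_mul]
  set g : Ω → ℝ := fun ω => h xhat ω - μh with hg_def
  have hgmeas : Measurable g := (hmeas xhat).sub measurable_const
  have hgbd : ∀ ω, |g ω| ≤ cc := by
    intro ω
    rw [abs_le]
    have := hbdd xhat ω
    simp only [Set.mem_Icc] at this
    constructor <;> simp only [hg_def, hcc_def] <;> [linarith [hμh_mem.2]; linarith [hμh_mem.1]]
  have hgmean : ∫ ω, g ω ∂Q = 0 := by
    simp only [hg_def]
    rw [integral_sub (hint_h xhat) (integrable_const μh), integral_const, probReal_univ,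
      smul_eq_mul, one_mul, hμh_def, sub_self]
  -- the sampled variables
  set X : Fin n → Θ → ℝ := fun i θ => g (W i θ) with hX_def
  have hXmeas : ∀ i, Measurable (X i) := fun i => hgmeas.comp (hWmeas i)
  have hXindep : iIndepFun X P :=
    hindep.comp (fun _ => g) (fun _ => hgmeas)
  have hXbd : ∀ i θ, |X i θ| ≤ cc := fun i θ => hgbd (W i θ)
  have hXmean : ∀ i, ∫ θ, X i θ ∂P = 0 := by
    intro i
    have : ∫ θ, X i θ ∂P = ∫ ω, g ω ∂(Measure.map (W i) P) := by
      rw [integral_map (hWmeas i).aemeasurable hgmeas.aestronglyMeasurable]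
    rw [this, hdist i, hgmean]
  have hnXindep : iIndepFun (fun i => fun θ => -X i θ) P :=
    hXindep.comp (fun _ => fun y : ℝ => -y) (fun _ => measurable_neg)
  set a : ℝ := κ * δ ^ 2 / 2 with ha_def
  have hapos : 0 < a := by positivity
  -- the two one-sided Chernoff bounds
  have hub := SAA.chernoff P n X hXmeas hXindep hccpos hXbd hXmean hapos.le
  have hlb := SAA.chernoff P n (fun i θ => -X i θ) (fun i => (hXmeas i).neg) hnXindep hccpos
    (fun i θ => by rw [abs_neg]; exact hXbd i θ)
    (fun i => by rw [integral_neg, hXmean i, neg_zero]) hapos.le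
  -- numerics: the tail bound is at most ε/2
  have htail : Real.exp (-(n * a ^ 2) / (2 * cc ^ 2)) ≤ ε / 2 := by
    have hεlog : Real.exp (Real.log (ε / 2)) = ε / 2 := Real.exp_log (by positivity)
    rw [← hεlog]
    apply Real.exp_le_exp.2
    have hkey : -2 * Real.log (ε / 2) * cc ^ 2 ≤ (n : ℝ) * a ^ 2 := by
      have ha2 : a ^ 2 = κ ^ 2 * δ ^ 4 / 4 := by rw [ha_def]; ring
      have h1 : (n : ℝ) * (κ ^ 2 * δ ^ 4) ≥ -8 * Real.log (ε / 2) * cc ^ 2 := by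
        rw [ge_iff_le, div_le_iff₀ (by positivity)] at hsize
        calc -8 * Real.log (ε / 2) * cc ^ 2 = -8 * Real.log (ε / 2) * (M - m) ^ 2 := by
              rw [hcc_def]
          _ ≤ (n : ℝ) * (κ ^ 2 * δ ^ 4) := hsize
      nlinarith
    rw [div_le_iff₀ (by positivity)]
    nlinarith
  -- good event
  set good : Set Θ := {θ | |∑ i, X i θ| ≤ (n : ℝ) * a} with hgood_def
  have hgoodmeas : MeasurableSet good := by
    have : Measurable (fun θ => |∑ i, X i θ|) :=
      (Finset.measurable_sum _ (fun i _ => hXmeas i)).abs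
    exact this measurableSet_Iic
  -- complement bound
  have hcompl : (P goodᶜ).toReal ≤ ε := by
    have hsub : goodᶜ ⊆ {θ | (n : ℝ) * a ≤ ∑ i, X i θ} ∪
        {θ | (n : ℝ) * a ≤ ∑ i, (fun i θ => -X i θ) i θ} := by
      intro θ hθ
      simp only [hgood_def, Set.mem_compl_iff, Set.mem_setOf_eq, not_le] at hθ
      rcases abs_cases (∑ i, X i θ) with ⟨heq, _⟩ | ⟨heq, _⟩
      · left
        simp only [Set.mem_setOf_eq]
        linarith [hθ, heq]
      · right
        simp only [Set.mem_setOf_eq]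
        simp only [Finset.sum_neg_distrib]
        linarith [hθ, heq]
    have h1 : P goodᶜ ≤ P {θ | (n : ℝ) * a ≤ ∑ i, X i θ} +
        P {θ | (n : ℝ) * a ≤ ∑ i, (fun i θ => -X i θ) i θ} :=
      le_trans (measure_mono hsub) (measure_union_le _ _)
    have h2 : (P goodᶜ).toReal ≤ (P {θ | (n : ℝ) * a ≤ ∑ i, X i θ}).toReal +
        (P {θ | (n : ℝ) * a ≤ ∑ i, (fun i θ => -X i θ) i θ}).toReal := by
      rw [← ENNReal.toReal_add (measure_ne_top _ _) (measure_ne_top _ _)]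
      exact ENNReal.toReal_mono (by finiteness) h1
    linarith [hub.trans htail, hlb.trans htail]
  -- inclusion of good event into the target event
  have hincl : good ⊆ {θ | ∀ x, ‖x - xhat‖ ≤ δ →
      |(c x + (1 / (n : ℝ)) * ∑ i, h x (W i θ)) -
        (c x + ∫ ω, h x ω ∂Q)| ≤ κ * δ ^ 2} := by
    intro θ hθ
    simp only [hgood_def, Set.mem_setOf_eq] at hθ ⊢
    intro x hx
    have hn' : (0:ℝ) < n := Nat.cast_pos.2 hn
    have hinv : (1 / (n : ℝ)) * (n : ℝ) = 1 := by
      field_simp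
    have key : (c x + (1 / (n : ℝ)) * ∑ i, h x (W i θ)) - (c x + ∫ ω, h x ω ∂Q)
        = (1 / (n : ℝ)) * ∑ i, (h x (W i θ) - h xhat (W i θ))
          + (1 / (n : ℝ)) * ∑ i, X i θ
          + (μh - ∫ ω, h x ω ∂Q) := by
      have e1 : ∑ i, X i θ = (∑ i, h xhat (W i θ)) - (n : ℝ) * μh := by
        simp only [hX_def, hg_def]
        rw [Finset.sum_sub_distrib, Finset.sum_const, Finset.card_univ,
          Fintype.card_fin, nsmul_eq_mul]
      have e2 : ∑ i, (h x (W i θ) - h xhat (W i θ))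
          = (∑ i, h x (W i θ)) - ∑ i, h xhat (W i θ) := by rw [Finset.sum_sub_distrib]
      rw [e1, e2]
      generalize (∑ i, h x (W i θ)) = S1
      generalize (∑ i, h xhat (W i θ)) = S2
      generalize (∫ ω, h x ω ∂Q) = I
      have : (1 / (n : ℝ)) * (S2 - (n:ℝ) * μh) = (1 / (n : ℝ)) * S2 - μh := by
        rw [mul_sub, ← mul_assoc, hinv]
        ring
      rw [this]
      ring
    rw [key]
    have t1 : |(1 / (n : ℝ)) * ∑ i, (h x (W i θ) - h xhat (W i θ))| ≤ L * δ := by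
      rw [abs_mul, abs_of_pos (by positivity : (0:ℝ) < 1 / (n:ℝ))]
      have : |∑ i, (h x (W i θ) - h xhat (W i θ))| ≤ (n : ℝ) * (L * δ) := by
        calc |∑ i, (h x (W i θ) - h xhat (W i θ))|
            ≤ ∑ i, |h x (W i θ) - h xhat (W i θ)| := Finset.abs_sum_le_sum_abs _ _
          _ ≤ ∑ _i : Fin n, L * δ := by
              apply Finset.sum_le_sum
              intro i _
              calc |h x (W i θ) - h xhat (W i θ)| ≤ L * ‖x - xhat‖ := hLip (W i θ) x xhat
                _ ≤ L * δ := by nlinarith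
          _ = (n : ℝ) * (L * δ) := by simp [mul_comm]
      calc (1 / (n : ℝ)) * |∑ i, (h x (W i θ) - h xhat (W i θ))|
          ≤ (1 / (n : ℝ)) * ((n : ℝ) * (L * δ)) := by
            apply mul_le_mul_of_nonneg_left this (by positivity)
        _ = L * δ := by field_simp
    have t2 : |(1 / (n : ℝ)) * ∑ i, X i θ| ≤ a := by
      rw [abs_mul, abs_of_pos (by positivity : (0:ℝ) < 1 / (n:ℝ))]
      calc (1 / (n : ℝ)) * |∑ i, X i θ| ≤ (1 / (n : ℝ)) * ((n : ℝ) * a) := by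
            apply mul_le_mul_of_nonneg_left hθ (by positivity)
        _ = a := by field_simp
    have t3 : |μh - ∫ ω, h x ω ∂Q| ≤ L * δ := by
      calc |μh - ∫ ω, h x ω ∂Q| ≤ L * ‖xhat - x‖ := hLipE xhat x
        _ = L * ‖x - xhat‖ := by rw [norm_sub_rev]
        _ ≤ L * δ := by nlinarith
    calc |(1 / (n : ℝ)) * ∑ i, (h x (W i θ) - h xhat (W i θ))
          + (1 / (n : ℝ)) * ∑ i, X i θ + (μh - ∫ ω, h x ω ∂Q)|
        ≤ |(1 / (n : ℝ)) * ∑ i, (h x (W i θ) - h xhat (W i θ))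
            + (1 / (n : ℝ)) * ∑ i, X i θ| + |μh - ∫ ω, h x ω ∂Q| := abs_add_le _ _
      _ ≤ (|(1 / (n : ℝ)) * ∑ i, (h x (W i θ) - h xhat (W i θ))|
            + |(1 / (n : ℝ)) * ∑ i, X i θ|) + |μh - ∫ ω, h x ω ∂Q| := by
          gcongr
          exact abs_add_le _ _
      _ ≤ (L * δ + a) + L * δ := by gcongr
      _ ≤ κ * δ ^ 2 := by
          rw [ha_def]
          nlinarith
  -- conclusion
  have hmono : P good ≤ P {θ | ∀ x, ‖x - xhat‖ ≤ δ →
      |(c x + (1 / (n : ℝ)) * ∑ i, h x (W i θ)) -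
        (c x + ∫ ω, h x ω ∂Q)| ≤ κ * δ ^ 2} := measure_mono hincl
  have hsum : (P good).toReal + (P goodᶜ).toReal = 1 := by
    rw [← ENNReal.toReal_add (measure_ne_top _ _) (measure_ne_top _ _),
      prob_add_prob_compl hgoodmeas, ENNReal.toReal_one]
  have hfin : (P good).toReal ≤ (P {θ | ∀ x, ‖x - xhat‖ ≤ δ →
      |(c x + (1 / (n : ℝ)) * ∑ i, h x (W i θ)) -
        (c x + ∫ ω, h x ω ∂Q)| ≤ κ * δ ^ 2}).toReal :=
    ENNReal.toReal_mono (measure_ne_top _ _) hmono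
  linarith
end

section
/- Let E be a real inner product space and let d, g ∈ E with d + g ≠ 0. Then the function λ ↦ (1/2)·‖λ·(−d) + (1−λ)·g‖² on ℝ attains its unique minimum at λ* = (⟨g, d⟩ + ‖g‖²)/(‖d‖² + ‖g‖² + 2·⟨g, d⟩). -/
lemma key_expand {E : Type*} [NormedAddCommGroup E] [InnerProductSpace ℝ E]
    (d g : E) (lam : ℝ) :
    ‖lam • (-d) + (1 - lam) • g‖ ^ 2 =
      ‖g‖ ^ 2 - 2 * lam * (inner ℝ g (d + g) : ℝ) + lam ^ 2 * ‖d + g‖ ^ 2 := by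
  have h : lam • (-d) + (1 - lam) • g = g - lam • (d + g) := by
    simp [smul_add, sub_smul, smul_neg]; abel
  rw [h, @norm_sub_sq_real, real_inner_smul_right, norm_smul]
  simp [real_inner_comm]
  rw [mul_pow, sq_abs]
  ring

/-- Closed form of the optimal weight in the SCS direction-finding subproblem:
if `d + g ≠ 0`, the map `λ ↦ (1/2) ‖λ • (-d) + (1-λ) • g‖²` attains its unique
minimum over `ℝ` at `λ* = (⟪g, d⟫ + ‖g‖²) / (‖d‖² + ‖g‖² + 2 ⟪g, d⟫)`. -/
theorem stmt9 {E : Type*} [NormedAddCommGroup E] [InnerProductSpace ℝ E]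
    (d g : E) (hne : d + g ≠ 0) (lamStar : ℝ)
    (hlam : lamStar = ((inner ℝ g d : ℝ) + ‖g‖ ^ 2) /
      (‖d‖ ^ 2 + ‖g‖ ^ 2 + 2 * (inner ℝ g d : ℝ))) :
    (∀ lam : ℝ,
        (1 / 2) * ‖lamStar • (-d) + (1 - lamStar) • g‖ ^ 2 ≤
          (1 / 2) * ‖lam • (-d) + (1 - lam) • g‖ ^ 2) ∧
    (∀ lam : ℝ, lam ≠ lamStar →
        (1 / 2) * ‖lamStar • (-d) + (1 - lamStar) • g‖ ^ 2 <
          (1 / 2) * ‖lam • (-d) + (1 - lam) • g‖ ^ 2) := by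
  set A : ℝ := ‖d + g‖ ^ 2 with hA
  set c : ℝ := (inner ℝ g (d + g) : ℝ) with hc
  have hApos : 0 < A := by
    have := norm_pos_iff.mpr hne
    positivity
  have hcden : ‖d‖ ^ 2 + ‖g‖ ^ 2 + 2 * (inner ℝ g d : ℝ) = A := by
    rw [hA, @norm_add_sq_real, real_inner_comm]; ring
  have hcnum : (inner ℝ g d : ℝ) + ‖g‖ ^ 2 = c := by
    rw [hc, inner_add_right, real_inner_self_eq_norm_sq]
  have hlam' : lamStar = c / A := by rw [hlam, hcden, hcnum]
  have hcA : c = A * lamStar := by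
    rw [hlam']
    field_simp
  have key : ∀ lam : ℝ, lam ≠ lamStar →
      (1 / 2) * ‖lamStar • (-d) + (1 - lamStar) • g‖ ^ 2 <
        (1 / 2) * ‖lam • (-d) + (1 - lam) • g‖ ^ 2 := by
    intro lam hne'
    rw [key_expand, key_expand, ← hc, ← hA]
    have h0 : 0 < (lam - lamStar) ^ 2 := pow_two_pos_of_ne_zero (sub_ne_zero.mpr hne')
    rw [hcA] at *
    nlinarith [mul_pos hApos h0]
  refine ⟨fun lam => ?_, key⟩
  by_cases h : lam = lamStar
  · rw [h]
  · exact (key lam h).le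
end

section
/- Let d, g be elements of a real inner product space with ‖g‖ > ‖d‖ > 0 and let 0 < m₂ < 1/2. If −m₂·‖d‖² ≤ ⟨g, d⟩ ≤ 0, then λ* = (⟨g, d⟩ + ‖g‖²)/(‖d‖² + ‖g‖² + 2·⟨g, d⟩) ≥ 2/17. -/
/-- Step in case (a) of the optimality Lemma: if `‖g‖ > ‖d‖ > 0`,
`0 < m₂ < 1/2` and `-m₂ ‖d‖² ≤ ⟪g, d⟫ ≤ 0`, then the optimal weight
`λ* = (⟪g,d⟫ + ‖g‖²)/(‖d‖² + ‖g‖² + 2⟪g,d⟫)` is at least `2/17`. -/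
theorem stmt11 {E : Type*} [NormedAddCommGroup E] [InnerProductSpace ℝ E]
    (d g : E) (hdg : ‖g‖ > ‖d‖) (hd : ‖d‖ > 0)
    (m₂ : ℝ) (hm₂0 : 0 < m₂) (hm₂1 : m₂ < 1 / 2)
    (h1 : -m₂ * ‖d‖ ^ 2 ≤ (inner ℝ g d : ℝ)) (h2 : (inner ℝ g d : ℝ) ≤ 0) :
    ((inner ℝ g d : ℝ) + ‖g‖ ^ 2) / (‖d‖ ^ 2 + ‖g‖ ^ 2 + 2 * (inner ℝ g d : ℝ))
      ≥ 2 / 17 := by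
  set t := (inner ℝ g d : ℝ)
  have ha : (0:ℝ) < ‖d‖ ^ 2 := by positivity
  have hb : ‖d‖ ^ 2 < ‖g‖ ^ 2 := by
    have := hd
    nlinarith
  have ht : -(‖d‖ ^ 2) / 2 < t := by nlinarith
  have hden : 0 < ‖d‖ ^ 2 + ‖g‖ ^ 2 + 2 * t := by nlinarith
  rw [ge_iff_le, div_le_div_iff₀ (by norm_num) hden]
  nlinarith
end

section
/- Let E be a finite-dimensional real inner product space, V ⊆ E a linear subspace with orthogonal projection P : E → V, and C ⊆ E a nonempty compact convex set. Let q̄ be the minimum-norm element of P(C) and assume q̄ ≠ 0. Then min over unit vectors d ∈ V (‖d‖ = 1) of sup_{q ∈ C} ⟨d, q⟩ equals −‖q̄‖; equivalently, −min_{d ∈ V, ‖d‖=1} max_{q ∈ C} ⟨d, q⟩ = ‖q̄‖. -/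
/-- Lemma (`‖d̃*‖ = 𝒳̃(x̂)`): for a nonempty compact convex `C` in a
finite-dimensional real inner product space, with `P` the orthogonal
projection onto the subspace `V` and `q̄` the minimum-norm element of `P(C)`
(assumed nonzero), the minimum over unit vectors `d ∈ V` of
`max_{q ∈ C} ⟪d, q⟫` equals `-‖q̄‖`. -/
theorem stmt14 {E : Type*} [NormedAddCommGroup E] [InnerProductSpace ℝ E]
    [FiniteDimensional ℝ E]
    (V : Submodule ℝ E) (C : Set E)
    (hCne : C.Nonempty) (hCcomp : IsCompact C) (hCconv : Convex ℝ C)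
    (qbar : E)
    (hqmem : qbar ∈ (fun x => (V.orthogonalProjection x : E)) '' C)
    (hqmin : ∀ q ∈ (fun x => (V.orthogonalProjection x : E)) '' C,
      ‖qbar‖ ≤ ‖q‖)
    (hq0 : qbar ≠ 0) :
    sInf ((fun d => sSup ((fun q => (inner ℝ d q : ℝ)) '' C)) ''
        {d : E | d ∈ V ∧ ‖d‖ = 1}) = -‖qbar‖ := by
  obtain ⟨q0, hq0C, hq0P⟩ := hqmem
  set P : E → E := fun x => (V.orthogonalProjection x : E) with hPdef
  have hqV : qbar ∈ V := by
    rw [← hq0P]; exact (V.orthogonalProjection q0).2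
  have hnq : (0:ℝ) < ‖qbar‖ := norm_pos_iff.mpr hq0
  have hqmemK : qbar ∈ P '' C := ⟨q0, hq0C, hq0P⟩
  have hKconv : Convex ℝ (P '' C) := by
    have := hCconv.linear_image (V.subtype.comp (V.orthogonalProjection).toLinearMap)
    simp [Set.image_image] at this; exact this
  -- variational inequality: qbar is the projection of 0 onto P '' C
  have hkey : ∀ p ∈ P '' C, ‖qbar‖ ^ 2 ≤ (inner ℝ qbar p : ℝ) := by
    intro p hp
    haveI : Nonempty (P '' C) := ⟨⟨qbar, hqmemK⟩⟩
    have hbdd : BddBelow (Set.range fun w : P '' C => ‖(0:E) - (w:E)‖) :=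
      ⟨0, by rintro x ⟨w, rfl⟩; positivity⟩
    have hinf : ‖(0:E) - qbar‖ = ⨅ w : P '' C, ‖(0:E) - (w:E)‖ := by
      apply le_antisymm
      · apply le_ciInf; intro w
        simpa using hqmin w w.2
      · have := ciInf_le hbdd (⟨qbar, hqmemK⟩ : P '' C)
        simpa using this
    have h2 := (norm_eq_iInf_iff_real_inner_le_zero hKconv hqmemK).mp hinf p hp
    rw [zero_sub, inner_neg_left, neg_nonpos] at h2
    rw [inner_sub_right, real_inner_self_eq_norm_sq] at h2
    linarith
  -- inner products with vectors of V only see the projection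
  have hinner : ∀ d ∈ V, ∀ q : E, (inner ℝ d q : ℝ) = inner ℝ d (P q) := by
    intro d hd q
    have h := V.starProjection_inner_eq_zero q d hd
    rw [inner_sub_left] at h
    have h' : (inner ℝ q d : ℝ) - inner ℝ (P q) d = 0 := h
    have e1 : (inner ℝ d q : ℝ) = inner ℝ q d := (real_inner_comm q d)
    have e2 : (inner ℝ d (P q) : ℝ) = inner ℝ (P q) d := (real_inner_comm (P q) d)
    linarith
  -- the optimal direction
  set dstar : E := (-‖qbar‖⁻¹) • qbar with hdstar
  have hdV : dstar ∈ V := V.smul_mem _ hqV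
  have hdnorm : ‖dstar‖ = 1 := by
    rw [hdstar, norm_smul, norm_neg, norm_inv, norm_norm]
    field_simp
  have hbound : ∀ q ∈ C, (inner ℝ dstar q : ℝ) ≤ -‖qbar‖ := by
    intro q hq
    rw [hinner dstar hdV q, hdstar, real_inner_smul_left]
    have h1 := hkey (P q) ⟨q, hq, rfl⟩
    have h2 : ‖qbar‖⁻¹ * ‖qbar‖ ^ 2 = ‖qbar‖ := by field_simp
    nlinarith [inv_pos.mpr hnq]
  have hval : (inner ℝ dstar q0 : ℝ) = -‖qbar‖ := by
    rw [hinner dstar hdV q0]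
    show (inner ℝ dstar (P q0) : ℝ) = -‖qbar‖
    rw [hq0P, hdstar, real_inner_smul_left, real_inner_self_eq_norm_sq]
    field_simp
  have hsup : sSup ((fun q => (inner ℝ dstar q : ℝ)) '' C) = -‖qbar‖ := by
    apply le_antisymm
    · exact csSup_le (hCne.image _) (by rintro x ⟨q, hq, rfl⟩; exact hbound q hq)
    · exact le_csSup ⟨-‖qbar‖, by rintro x ⟨q, hq, rfl⟩; exact hbound q hq⟩
        ⟨q0, hq0C, hval⟩
  have hlow : ∀ d ∈ {d : E | d ∈ V ∧ ‖d‖ = 1},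
      -‖qbar‖ ≤ sSup ((fun q => (inner ℝ d q : ℝ)) '' C) := by
    rintro d ⟨hdV', hd1⟩
    have hbdd : BddAbove ((fun q => (inner ℝ d q : ℝ)) '' C) :=
      (hCcomp.image (continuous_const.inner continuous_id)).bddAbove
    have h1 : -‖qbar‖ ≤ (inner ℝ d q0 : ℝ) := by
      rw [hinner d hdV' q0]
      show -‖qbar‖ ≤ (inner ℝ d (P q0) : ℝ)
      rw [hq0P]
      have h2 := abs_real_inner_le_norm d qbar
      rw [hd1, one_mul] at h2
      linarith [neg_abs_le (inner ℝ d qbar : ℝ)]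
    exact h1.trans (le_csSup hbdd ⟨q0, hq0C, rfl⟩)
  apply le_antisymm
  · exact csInf_le ⟨-‖qbar‖, by rintro x ⟨d, hd, rfl⟩; exact hlow d hd⟩
      ⟨dstar, ⟨hdV, hdnorm⟩, hsup⟩
  · exact le_csInf ⟨_, dstar, ⟨hdV, hdnorm⟩, rfl⟩
      (by rintro x ⟨d, hd, rfl⟩; exact hlow d hd)
end
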